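/- arXiv:2208.07940 — 2 statements merged into one kernel-verified Lean document; each statement's English description precedes it below -/
import Mathlib

section
/- A commutative Noetherian cu-uniserial ring is either a uniserial ring or a principal ideal domain with zero Jacobson radical. -/
/-- The radical of a module: intersection of all maximal submodules. -/
def ModRadical (R M : Type*) [Ring R] [AddCommGroup M] [Module R M] : Submodule R M :=
  sInf {N : Submodule R M | IsCoatom N}

/-- A module is cyclic if it is generated by one element. -/
def IsCyclicMod (R M : Type*) [Ring R] [AddCommGroup M] [Module R M] : Prop :=
  ∃ x : M, Submodule.span R {x} = ⊤

/-- A module is uniform if it is nonzero and any two nonzero submodules intersect nontrivially. -/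
def IsUniformMod (R M : Type*) [Ring R] [AddCommGroup M] [Module R M] : Prop :=
  Nontrivial M ∧ ∀ A B : Submodule R M, A ≠ ⊥ → B ≠ ⊥ → A ⊓ B ≠ ⊥

/-- A module is cyclic-uniform uniserial (cu-uniserial) if it is nonzero and for every
nonzero finitely generated submodule `K`, the quotient `K / Rad K` is cyclic and uniform. -/
def IsCUUniserial (R M : Type*) [Ring R] [AddCommGroup M] [Module R M] : Prop :=
  Nontrivial M ∧ ∀ K : Submodule R M, K ≠ ⊥ → K.FG →
    IsCyclicMod R (↥K ⧸ ModRadical R ↥K) ∧ IsUniformMod R (↥K ⧸ ModRadical R ↥K)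

section Aux

variable {R : Type*} [CommRing R]

/-- In a Noetherian module, every proper submodule is below a coatom. -/
theorem exists_coatom_le_of_ne_top {M : Type*} [AddCommGroup M] [Module R M]
    [IsNoetherian R M] {N : Submodule R M} (hN : N ≠ ⊤) :
    ∃ C : Submodule R M, IsCoatom C ∧ N ≤ C := by
  have hset := set_has_maximal_iff_noetherian.mpr (inferInstance : IsNoetherian R M)
  obtain ⟨C, ⟨hCle, hCne⟩, hmax⟩ :=
    hset {P : Submodule R M | N ≤ P ∧ P ≠ ⊤} ⟨N, le_rfl, hN⟩
  refine ⟨C, ⟨hCne, fun b hb => ?_⟩, hCle⟩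
  by_contra hbne
  exact hmax b ⟨hCle.trans hb.le, hbne⟩ hb

/-- Transport of uniformity along a linear equivalence. -/
theorem IsUniformMod.congr {M N : Type*} [AddCommGroup M] [Module R M]
    [AddCommGroup N] [Module R N] (e : M ≃ₗ[R] N) (h : IsUniformMod R M) :
    IsUniformMod R N := by
  obtain ⟨hnt, hu⟩ := h
  constructor
  · exact e.toEquiv.symm.nontrivial
  · intro A B hA hB
    have key : ∀ A : Submodule R N, A ≠ ⊥ → A.comap (e : M →ₗ[R] N) ≠ ⊥ := by
      intro A hA
      obtain ⟨x, hx, hx0⟩ := (Submodule.ne_bot_iff A).mp hA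
      refine (Submodule.ne_bot_iff _).mpr ⟨e.symm x, ?_, ?_⟩
      · simp [Submodule.mem_comap, hx]
      · intro hz
        exact hx0 (by simpa using congrArg e hz)
    have := hu _ _ (key A hA) (key B hB)
    obtain ⟨y, hy, hy0⟩ := (Submodule.ne_bot_iff _).mp this
    refine (Submodule.ne_bot_iff _).mpr ⟨e y, ⟨?_, ?_⟩, ?_⟩
    · exact hy.1
    · exact hy.2
    · intro hz
      exact hy0 (by simpa using congrArg e.symm hz)

variable [IsNoetherianRing R]

/-- Every ideal whose top quotient by the radical is cyclic is principal. -/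
theorem principal_of_cyclic (K : Ideal R)
    (hc : IsCyclicMod R (↥K ⧸ ModRadical R ↥K)) :
    ∃ c : R, K = Ideal.span {c} := by
  obtain ⟨y, hy⟩ := hc
  obtain ⟨x, rfl⟩ := Submodule.Quotient.mk_surjective (ModRadical R ↥K) y
  -- span {x} ⊔ Rad = ⊤
  have hmap : Submodule.map (ModRadical R ↥K).mkQ (Submodule.span R {x}) = ⊤ := by
    rw [Submodule.map_span, Set.image_singleton]
    simpa using hy
  have hsup : Submodule.span R {x} ⊔ ModRadical R ↥K = ⊤ := by
    have := congrArg (Submodule.comap (ModRadical R ↥K).mkQ) hmap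
    rwa [Submodule.comap_map_eq, Submodule.ker_mkQ, Submodule.comap_top] at this
  -- radical is superfluous
  haveI : IsNoetherian R ↥K := isNoetherian_submodule' K
  have htop : Submodule.span R {x} = (⊤ : Submodule R ↥K) := by
    by_contra hne
    obtain ⟨C, hC, hleC⟩ := exists_coatom_le_of_ne_top hne
    have hrad : ModRadical R ↥K ≤ C := sInf_le hC
    exact hC.1 (top_le_iff.mp (hsup ▸ sup_le hleC hrad))
  refine ⟨(x : R), ?_⟩
  have := congrArg (Submodule.map K.subtype) htop
  rw [Submodule.map_span, Set.image_singleton, Submodule.map_subtype_top] at this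
  exact this.symm

/-- If `R ⧸ J(R)` is uniform as a module, then `J(R)` is prime. -/
theorem jac_prime
    (hu : IsUniformMod R (R ⧸ (Ideal.jacobson (⊥ : Ideal R) : Submodule R R))) :
    (Ideal.jacobson (⊥ : Ideal R)).IsPrime := by
  set J := Ideal.jacobson (⊥ : Ideal R) with hJdef
  have hrad : ∀ (a : R) (n : ℕ), a ^ n ∈ J → a ∈ J := by
    intro a n hn
    rw [hJdef, Ideal.jacobson, Submodule.mem_sInf]
    intro m hm
    have hle : J ≤ m := sInf_le hm
    exact hm.2.isPrime.mem_of_pow_mem n (hle hn)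
  constructor
  · -- J ≠ ⊤
    intro heq
    haveI := hu.1
    obtain ⟨a, b, hab⟩ := hu.1
    apply hab
    have hz : ∀ z : R ⧸ (J : Submodule R R), z = 0 := by
      intro z
      obtain ⟨w, rfl⟩ := Submodule.Quotient.mk_surjective _ z
      rw [Submodule.Quotient.mk_eq_zero]
      rw [heq]; trivial
    rw [hz a, hz b]
  · intro a b hab
    by_cases hbJ : b ∈ J
    · exact Or.inr hbJ
    left
    -- ascending chain of colon ideals
    have hmono : Monotone fun n : ℕ => J.colon (Ideal.span {a ^ n}) := by
      intro m n hmn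
      intro r hr
      rw [Submodule.mem_colon_span_singleton, smul_eq_mul] at hr ⊢
      obtain ⟨k, rfl⟩ := Nat.exists_eq_add_of_le hmn
      have : r * a ^ (m + k) = r * a ^ m * a ^ k := by ring
      rw [this]
      exact J.mul_mem_right _ hr
    obtain ⟨n, hstab⟩ := monotone_stabilizes_iff_noetherian.mpr
      (inferInstance : IsNoetherian R R) ⟨_, hmono⟩
    by_cases han : a ^ n ∈ J
    · exact hrad a n han
    exfalso
    set A := Submodule.span R
      {(Submodule.Quotient.mk (a ^ n) : R ⧸ (J : Submodule R R))} with hAdef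
    set B := Submodule.span R
      {(Submodule.Quotient.mk b : R ⧸ (J : Submodule R R))} with hBdef
    have hA : A ≠ ⊥ := by
      rw [hAdef, Ne, Submodule.span_singleton_eq_bot, Submodule.Quotient.mk_eq_zero]
      exact han
    have hB : B ≠ ⊥ := by
      rw [hBdef, Ne, Submodule.span_singleton_eq_bot, Submodule.Quotient.mk_eq_zero]
      exact hbJ
    obtain ⟨z, hz, hz0⟩ := (Submodule.ne_bot_iff _).mp (hu.2 A B hA hB)
    obtain ⟨c, hc⟩ := Submodule.mem_span_singleton.mp hz.1
    obtain ⟨d, hd⟩ := Submodule.mem_span_singleton.mp hz.2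
    rw [← Submodule.Quotient.mk_smul, smul_eq_mul] at hc hd
    have heq : c * a ^ n - d * b ∈ J := by
      rw [← Submodule.Quotient.eq]
      rw [hc, hd]
    have hc1 : c * a ^ (n + 1) ∈ J := by
      have h1 : (c * a ^ n - d * b) * a ∈ J := J.mul_mem_right a heq
      have h2 : d * (a * b) ∈ J := J.mul_mem_left d hab
      have h3 : c * a ^ (n + 1) = (c * a ^ n - d * b) * a + d * (a * b) := by ring
      rw [h3]; exact J.add_mem h1 h2
    have hcn : c ∈ J.colon (Ideal.span {a ^ n}) := by
      have hs : J.colon (Ideal.span {a ^ n}) = J.colon (Ideal.span {a ^ (n + 1)}) :=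
        hstab (n + 1) (Nat.le_succ n)
      rw [hs, Submodule.mem_colon_span_singleton, smul_eq_mul]
      exact hc1
    rw [Submodule.mem_colon_span_singleton, smul_eq_mul] at hcn
    apply hz0
    rw [← hc, Submodule.Quotient.mk_eq_zero]
    exact hcn

end Aux

theorem stmt13 {R : Type*} [CommRing R] [IsNoetherianRing R]
    (h : IsCUUniserial R R) :
    (∀ I J : Ideal R, I ≤ J ∨ J ≤ I) ∨
    (IsDomain R ∧ IsPrincipalIdealRing R ∧ Ideal.jacobson (⊥ : Ideal R) = ⊥) := by
  obtain ⟨hnt, hcu⟩ := h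
  haveI : Nontrivial R := hnt
  have htopne : (⊤ : Ideal R) ≠ ⊥ := by
    intro hh
    have h1 : (1 : R) ∈ (⊥ : Ideal R) := hh ▸ trivial
    rw [Ideal.mem_bot] at h1
    exact one_ne_zero h1
  -- every ideal is principal
  have hprin : ∀ K : Ideal R, ∃ c, K = Ideal.span {c} := by
    intro K
    by_cases hK : K = ⊥
    · exact ⟨0, by rw [hK]; exact (Ideal.span_singleton_eq_bot.mpr rfl).symm⟩
    · exact principal_of_cyclic K (hcu K hK (IsNoetherian.noetherian K)).1
  -- the Jacobson radical is prime
  have hJp : (Ideal.jacobson (⊥ : Ideal R)).IsPrime := by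
    have hun := (hcu ⊤ htopne (IsNoetherian.noetherian ⊤)).2
    apply jac_prime
    -- transport along the equivalence ↥⊤ ≃ₗ R
    let e0 : (↥(⊤ : Ideal R)) ≃ₗ[R] R := Submodule.topEquiv
    let oi : Submodule R (↥(⊤ : Ideal R)) ≃o Submodule R R := Submodule.orderIsoMapComap e0
    have hmap : Submodule.map (e0 : (↥(⊤ : Ideal R)) →ₗ[R] R)
        (ModRadical R ↥(⊤ : Ideal R)) = (Ideal.jacobson (⊥ : Ideal R) : Submodule R R) := by
      have h1 : Submodule.map (e0 : (↥(⊤ : Ideal R)) →ₗ[R] R)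
          (ModRadical R ↥(⊤ : Ideal R)) = oi (ModRadical R ↥(⊤ : Ideal R)) := rfl
      rw [h1, ModRadical, OrderIso.map_sInf]
      have himg : oi '' {N : Submodule R ↥(⊤ : Ideal R) | IsCoatom N}
          = {N : Submodule R R | IsCoatom N} := by
        ext N
        constructor
        · rintro ⟨P, hP, rfl⟩
          exact (oi.isCoatom_iff P).mpr hP
        · intro hN
          refine ⟨oi.symm N, ?_, oi.apply_symm_apply N⟩
          have : IsCoatom (oi (oi.symm N)) := by rwa [oi.apply_symm_apply]
          exact (oi.isCoatom_iff _).mp this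
      rw [← sInf_image, himg, Ideal.jacobson]
      congr 1
      ext N
      simp [Ideal.isMaximal_def, bot_le]
    exact IsUniformMod.congr
      (Submodule.Quotient.equiv (ModRadical R ↥(⊤ : Ideal R))
        (Ideal.jacobson (⊥ : Ideal R) : Submodule R R) e0 hmap) hun
  by_cases hJ : Ideal.jacobson (⊥ : Ideal R) = ⊥
  · right
    have hbotprime : (⊥ : Ideal R).IsPrime := hJ ▸ hJp
    haveI : NoZeroDivisors R := by
      constructor
      intro a b hab
      have : a * b ∈ (⊥ : Ideal R) := by simpa using hab
      rcases hbotprime.mem_or_mem this with h1 | h1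
      · left; simpa using h1
      · right; simpa using h1
    refine ⟨NoZeroDivisors.to_isDomain R, ?_, hJ⟩
    constructor
    intro I
    obtain ⟨c, hc⟩ := hprin I
    exact ⟨⟨c, by rw [hc]⟩⟩
  · left
    -- R is local
    have huniq : ∀ m1 m2 : Ideal R, m1.IsMaximal → m2.IsMaximal → m1 = m2 := by
      intro m1 m2 h1 h2
      by_contra hne
      obtain ⟨j0, hj0span⟩ := hprin (Ideal.jacobson (⊥ : Ideal R))
      have hj0ne : j0 ≠ 0 := by
        intro hh
        exact hJ (by rw [hj0span, hh, Ideal.span_singleton_eq_bot])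
      have hj0J : j0 ∈ Ideal.jacobson (⊥ : Ideal R) := by
        rw [hj0span]; exact Submodule.mem_span_singleton_self j0
      have key : ∀ m : Ideal R, m.IsMaximal → ∃ r, r * j0 = 0 ∧ r ∉ m := by
        intro m hm
        obtain ⟨p, hp⟩ := hprin m
        have hJle : ∀ m' : Ideal R, m'.IsMaximal → Ideal.jacobson (⊥ : Ideal R) ≤ m' := by
          intro m' hm'
          exact sInf_le ⟨bot_le, hm'⟩
        have hpJ : p ∉ Ideal.jacobson (⊥ : Ideal R) := by
          intro hpin
          have hmJ : m ≤ Ideal.jacobson (⊥ : Ideal R) := by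
            rw [hp]
            exact (Ideal.span_singleton_le_iff_mem _).mpr hpin
          have hle1 : m ≤ m1 := hmJ.trans (hJle m1 h1)
          have hle2 : m ≤ m2 := hmJ.trans (hJle m2 h2)
          have e1 : m = m1 := hm.eq_of_le h1.ne_top hle1
          have e2 : m = m2 := hm.eq_of_le h2.ne_top hle2
          exact hne (e1 ▸ e2)
        have hj0m : j0 ∈ m := hJle m hm hj0J
        rw [hp] at hj0m
        obtain ⟨a, ha⟩ := Ideal.mem_span_singleton'.mp hj0m
        have haJ : a ∈ Ideal.jacobson (⊥ : Ideal R) := by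
          have hapm : a * p ∈ Ideal.jacobson (⊥ : Ideal R) := ha ▸ hj0J
          rcases hJp.mem_or_mem hapm with hh | hh
          · exact hh
          · exact absurd hh hpJ
        rw [hj0span] at haJ
        obtain ⟨s, hs⟩ := Ideal.mem_span_singleton'.mp haJ
        refine ⟨1 - s * p, ?_, ?_⟩
        · linear_combination (-1 : R) * ha - p * hs
        · intro hmem
          have hpm : p ∈ m := by rw [hp]; exact Submodule.mem_span_singleton_self p
          have hspm : s * p ∈ m := m.mul_mem_left s hpm
          have hone : (1 : R) ∈ m := by
            have := m.add_mem hmem hspm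
            simpa using this
          exact hm.ne_top ((Ideal.eq_top_iff_one m).mpr hone)
      set T := Ideal.torsionOf R R j0 with hTdef
      by_cases hTtop : T = ⊤
      · have : (1 : R) ∈ T := hTtop ▸ trivial
        rw [hTdef, Ideal.mem_torsionOf_iff, smul_eq_mul, one_mul] at this
        exact hj0ne this
      · obtain ⟨m, hm, hTm⟩ := Ideal.exists_le_maximal T hTtop
        obtain ⟨r, hr0, hrm⟩ := key m hm
        exact hrm (hTm (by rw [hTdef, Ideal.mem_torsionOf_iff, smul_eq_mul]; exact hr0))
    haveI : IsLocalRing R := by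
      obtain ⟨m, hm⟩ := Ideal.exists_maximal R
      exact IsLocalRing.of_unique_max_ideal ⟨m, hm, fun I hI => huniq I m hI hm⟩
    set mm := IsLocalRing.maximalIdeal R with hmmdef
    have hmmmax : mm.IsMaximal := IsLocalRing.maximalIdeal.isMaximal R
    have hJlemm : Ideal.jacobson (⊥ : Ideal R) ≤ mm := sInf_le ⟨bot_le, hmmmax⟩
    obtain ⟨p, hp⟩ := hprin mm
    have hKrull : ⨅ n : ℕ, mm ^ n = ⊥ :=
      Ideal.iInf_pow_eq_bot_of_isLocalRing mm hmmmax.ne_top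
    have hpow : ∀ I : Ideal R, I ≠ ⊥ → ∃ n, I = mm ^ n := by
      intro I hI
      classical
      have hex : ∃ n, ¬ I ≤ mm ^ n := by
        by_contra hh
        push_neg at hh
        exact hI (le_bot_iff.mp (hKrull ▸ le_iInf hh))
      have hn0 := Nat.find_spec hex
      have hn0pos : Nat.find hex ≠ 0 := by
        intro h0
        rw [h0, pow_zero, Ideal.one_eq_top] at hn0
        exact hn0 le_top
      set k := Nat.find hex - 1 with hkdef
      have hsucc : k + 1 = Nat.find hex := Nat.succ_pred_eq_of_pos (Nat.pos_of_ne_zero hn0pos)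
      have hle : I ≤ mm ^ k := by
        by_contra hc
        exact Nat.find_min hex (by omega) hc
      obtain ⟨x, hxI, hxnot⟩ := SetLike.not_le_iff_exists.mp (hsucc ▸ hn0)
      have hxmem : x ∈ mm ^ k := hle hxI
      rw [hp, Ideal.span_singleton_pow] at hxmem
      obtain ⟨u, hu⟩ := Ideal.mem_span_singleton'.mp hxmem
      have hunotm : u ∉ mm := by
        intro hum
        apply hxnot
        rw [pow_succ]
        have hpk : p ^ k ∈ mm ^ k := by
          rw [hp, Ideal.span_singleton_pow]
          exact Submodule.mem_span_singleton_self _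
        have := Ideal.mul_mem_mul hpk hum
        rwa [show p ^ k * u = x by rw [← hu]; ring] at this
      have huu : IsUnit u := by
        by_contra hnu
        exact hunotm ((IsLocalRing.mem_maximalIdeal u).mpr hnu)
      obtain ⟨w, hw⟩ := huu
      have hpk : p ^ k ∈ I := by
        have h1 := I.mul_mem_left (↑w⁻¹) hxI
        have h2 : (↑w⁻¹ : R) * x = p ^ k := by
          rw [← hu, ← hw, ← mul_assoc]
          simp
        rwa [h2] at h1
      refine ⟨k, le_antisymm hle ?_⟩
      rw [hp, Ideal.span_singleton_pow]
      exact (Ideal.span_singleton_le_iff_mem _).mpr hpk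
    intro I I'
    by_cases hI : I = ⊥
    · left; rw [hI]; exact bot_le
    by_cases hI' : I' = ⊥
    · right; rw [hI']; exact bot_le
    obtain ⟨a, rfl⟩ := hpow I hI
    obtain ⟨b, rfl⟩ := hpow I' hI'
    rcases le_total a b with hab | hab
    · right; exact Ideal.pow_le_pow_right hab
    · left; exact Ideal.pow_le_pow_right hab
end

section
/- A commutative Noetherian principal ideal domain with infinitely many maximal ideals has zero Jacobson radical, and hence is a cu-uniserial ring. -/
/-- `ModRadical` transports along a linear equivalence. -/
lemma modRadical_map_equiv {R M N : Type*} [Ring R] [AddCommGroup M] [Module R M]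
    [AddCommGroup N] [Module R N] (e : M ≃ₗ[R] N) :
    ModRadical R N = (ModRadical R M).map (e : M →ₗ[R] N) := by
  have h : (Submodule.map (e : M →ₗ[R] N) (ModRadical R M)) =
      (Submodule.orderIsoMapComap e) (sInf {P : Submodule R M | IsCoatom P}) := rfl
  rw [ModRadical, h, OrderIso.map_sInf]
  have hset : {P : Submodule R N | IsCoatom P} =
      (Submodule.orderIsoMapComap e) '' {P : Submodule R M | IsCoatom P} := by
    refine Set.eq_of_subset_of_subset (fun P hP => ?_) (fun P hP => ?_)
    · exact ⟨(Submodule.orderIsoMapComap e).symm P,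
        ((Submodule.orderIsoMapComap e).symm.isCoatom_iff P).mpr hP,
        (Submodule.orderIsoMapComap e).apply_symm_apply P⟩
    · obtain ⟨Q, hQ, rfl⟩ := hP
      exact ((Submodule.orderIsoMapComap e).isCoatom_iff Q).mpr hQ
  rw [hset, sInf_image]

/-- Uniformity transports along a linear equivalence. -/
lemma isUniformMod_of_equiv {R M N : Type*} [Ring R] [AddCommGroup M] [Module R M]
    [AddCommGroup N] [Module R N] (e : M ≃ₗ[R] N) (h : IsUniformMod R M) :
    IsUniformMod R N := by
  obtain ⟨hnt, hu⟩ := h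
  refine ⟨e.toEquiv.symm.nontrivial, fun A B hA hB => ?_⟩
  have hinj : Function.Injective (e.symm : N →ₗ[R] M) := e.symm.injective
  have key : ∀ C : Submodule R N, Submodule.map (e.symm : N →ₗ[R] M) C = ⊥ → C = ⊥ := by
    intro C h
    exact Submodule.map_injective_of_injective hinj (by rw [h, Submodule.map_bot])
  have := hu _ _ (fun h => hA (key _ h)) (fun h => hB (key _ h))
  rw [← Submodule.map_inf _ hinj] at this
  exact fun h => this (by rw [h, Submodule.map_bot])

theorem stmt15 {R : Type*} [CommRing R] [IsDomain R] [IsPrincipalIdealRing R]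
    (hmax : {I : Ideal R | IsCoatom I}.Infinite) :
    Ideal.jacobson (⊥ : Ideal R) = ⊥ ∧ IsCUUniserial R R := by
  -- Step 1: the Jacobson radical is zero.
  have hjac : Ideal.jacobson (⊥ : Ideal R) = ⊥ := by
    by_contra hne
    obtain ⟨x, hx, hx0⟩ := Submodule.exists_mem_ne_zero_of_ne_bot hne
    have hxmem : ∀ M : Ideal R, M.IsMaximal → x ∈ M := by
      intro M hM
      exact sInf_le (show M ∈ {J | ⊥ ≤ J ∧ J.IsMaximal} from ⟨bot_le, hM⟩) hx
    have hfin : {v : IsDedekindDomain.HeightOneSpectrum R | v.asIdeal ∣ Ideal.span {x}}.Finite :=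
      Ideal.finite_factors (by
        simpa only [Ne, Submodule.zero_eq_bot, Ideal.span_singleton_eq_bot] using hx0)
    have hsub : {I : Ideal R | IsCoatom I} ⊆
        insert ⊥ (IsDedekindDomain.HeightOneSpectrum.asIdeal ''
          {v : IsDedekindDomain.HeightOneSpectrum R | v.asIdeal ∣ Ideal.span {x}}) := by
      intro I hI
      rcases eq_or_ne I ⊥ with h | h
      · exact Or.inl h
      · have hImax : I.IsMaximal := Ideal.isMaximal_def.mpr hI
        have hIp : I.IsPrime := hImax.isPrime
        refine Or.inr ⟨⟨I, hIp, h⟩, ?_, rfl⟩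
        exact (Ideal.dvd_iff_le).mpr
          ((Ideal.span_singleton_le_iff_mem I).mpr (hxmem I hImax))
    exact hmax ((hfin.image _).insert ⊥ |>.subset hsub)
  refine ⟨hjac, ?_⟩
  -- Step 2: cu-uniseriality.
  have hradR : ModRadical R R = ⊥ := by
    rw [← hjac, Ideal.jacobson, ModRadical]
    congr 1
    ext I
    simp [Ideal.isMaximal_def]
  refine ⟨inferInstance, fun K hK _ => ?_⟩
  obtain ⟨a, rfl⟩ := (IsPrincipalIdealRing.principal K).principal
  have ha : a ≠ 0 := by
    rintro rfl
    exact hK (by simp)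
  -- the linear equivalence R ≃ span {a}
  have hinj : Function.Injective (LinearMap.toSpanSingleton R R a) := by
    intro u v huv
    simpa [LinearMap.toSpanSingleton_apply, smul_eq_mul, mul_comm] using
      mul_right_cancel₀ ha (by simpa [smul_eq_mul] using huv)
  let e : R ≃ₗ[R] ↥(Submodule.span R {a}) :=
    (LinearEquiv.ofInjective _ hinj).trans
      (LinearEquiv.ofEq _ _ (LinearMap.span_singleton_eq_range R R a).symm)
  have hrad : ModRadical R ↥(Submodule.span R {a}) = ⊥ := by
    rw [modRadical_map_equiv e, hradR, Submodule.map_bot]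
  -- the span is cyclic, generated by ⟨a, _⟩
  have haMem : a ∈ Submodule.span R {a} := Submodule.mem_span_singleton_self a
  have hcyc : Submodule.span R {(⟨a, haMem⟩ : ↥(Submodule.span R {a}))} = ⊤ := by
    rw [eq_top_iff]
    rintro ⟨y, hy⟩ -
    obtain ⟨c, rfl⟩ := Submodule.mem_span_singleton.mp hy
    exact Submodule.mem_span_singleton.mpr ⟨c, rfl⟩
  constructor
  · -- cyclic: quotient of cyclic is cyclic
    refine ⟨Submodule.Quotient.mk ⟨a, haMem⟩, ?_⟩
    have : Submodule.span R ((ModRadical R ↥(Submodule.span R {a})).mkQ ''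
        {(⟨a, haMem⟩ : ↥(Submodule.span R {a}))}) = ⊤ := by
      rw [← Submodule.map_span, hcyc, Submodule.map_top, Submodule.range_mkQ]
    simpa using this
  · -- uniform
    have hKuniform : IsUniformMod R ↥(Submodule.span R {a}) := by
      refine ⟨⟨⟨a, haMem⟩, 0, fun h => ha (by simpa using congrArg Subtype.val h)⟩,
        fun A B hA hB => ?_⟩
      obtain ⟨u, hu, hu0⟩ := Submodule.exists_mem_ne_zero_of_ne_bot hA
      obtain ⟨v, hv, hv0⟩ := Submodule.exists_mem_ne_zero_of_ne_bot hB
      have hz : ((u : R) • v : ↥(Submodule.span R {a})) = (v : R) • u := by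
        ext
        simp [mul_comm]
      intro hbot
      have hmem : (u : R) • v ∈ A ⊓ B := by
        refine ⟨?_, B.smul_mem _ hv⟩
        rw [hz]
        exact A.smul_mem _ hu
      rw [hbot] at hmem
      have : (u : R) * (v : R) = 0 := by
        simpa using congrArg Subtype.val (Submodule.mem_bot R |>.mp hmem)
      rcases mul_eq_zero.mp this with h | h
      · exact hu0 (Subtype.ext h)
      · exact hv0 (Subtype.ext h)
    exact isUniformMod_of_equiv (Submodule.quotEquivOfEqBot _ hrad).symm hKuniform
end
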